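/- Let N be an acyclic CP-net with induced flip-based preference ≻, outcomes o₁ = R·x₁·o₁′ and o₂ = R·x₂·o₂′ sharing ancestor assignment R at variable X, with x₁ ≻ x₂ given R, and let x_i be a value with x₁ ≻ x_i ≻ x₂ given R. Let N_i be the sub-CP-net restricted to R·x_i with induced preference ≻_i. If o₁′ ≻_i o₂′, then o₁ ≻ o₂. -/

import Mathlib

theorem stmt_15 {n : ℕ} (D : Fin n → Type) [∀ i, Finite (D i)]
    (Pa : Fin n → Set (Fin n)) (hPa : ∀ i j, j ∈ Pa i → j < i)
    (r : ∀ i : Fin n, (∀ j, D j) → D i → D i → Prop)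
    (hdep : ∀ i o o', (∀ j ∈ Pa i, o j = o' j) → ∀ a b, (r i o a b ↔ r i o' a b))
    (hirr : ∀ i o a, ¬ r i o a a)
    (htrans : ∀ i o a b c, r i o a b → r i o b c → r i o a c)
    (htotal : ∀ i o (a b : D i), a ≠ b → r i o a b ∨ r i o b a)
    (flip : (∀ j, D j) → (∀ j, D j) → Prop)
    (hflip : ∀ a b, flip a b ↔ ∃ i, (∀ j, j ≠ i → a j = b j) ∧ r i b (a i) (b i))
    (pref : (∀ j, D j) → (∀ j, D j) → Prop)
    (hpref : ∀ a b, pref a b ↔ Relation.TransGen flip a b)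
(flipA : Fin n → (∀ j, D j) → (∀ j, D j) → Prop)
    (hflipA : ∀ k a b, flipA k a b ↔
      ∃ i, k < i ∧ (∀ j, j ≠ i → a j = b j) ∧ r i b (a i) (b i))
    (o₁ o₂ : ∀ j, D j) (k : Fin n)
    (hR : ∀ j, j < k → o₁ j = o₂ j)
    (xi : D k)
    (hx1i : r k o₁ (o₁ k) xi) (hxi2 : r k o₁ xi (o₂ k))
    (hsub : Relation.TransGen (flipA k)
      (Function.update o₁ k xi) (Function.update o₂ k xi)) :
    pref o₁ o₂ := by
  rw [hpref]
  -- step 3: flip o₁ (update o₁ k xi)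
  have h1 : flip o₁ (Function.update o₁ k xi) := by
    rw [hflip]
    refine ⟨k, fun j hj => (Function.update_of_ne hj _ _).symm, ?_⟩
    rw [Function.update_self]
    exact (hdep k o₁ (Function.update o₁ k xi)
      (fun j hj => (Function.update_of_ne (Fin.ne_of_lt (hPa k j hj)) _ _).symm)
      (o₁ k) xi).mp hx1i
  -- step 2: each flipA k step is a flip step
  have h2 : Relation.TransGen flip (Function.update o₁ k xi) (Function.update o₂ k xi) := by
    refine Relation.TransGen.mono ?_ _ _ hsub
    intro a b hab
    rw [hflipA] at hab
    obtain ⟨i, _, h, hr⟩ := hab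
    exact (hflip a b).mpr ⟨i, h, hr⟩
  -- step 1: flip (update o₂ k xi) o₂
  have h3 : flip (Function.update o₂ k xi) o₂ := by
    rw [hflip]
    refine ⟨k, fun j hj => Function.update_of_ne hj _ _, ?_⟩
    rw [Function.update_self]
    exact (hdep k o₁ o₂ (fun j hj => hR j (hPa k j hj)) xi (o₂ k)).mp hxi2
  exact (Relation.TransGen.head h1 h2).trans (Relation.TransGen.single h3)
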